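/- Let A be a Schur ring over a finite abelian group G = G₁ × G₂ such that G₁ and G₂ are A-subgroups. Then for every basic set X of A and each i ∈ {1,2}, the projection X_{G_i} of X to G_i is a basic set of A. -/

import Mathlib

open scoped BigOperators

/-- The indicator element `X̲ = Σ_{x∈X} x` of a finset in the integral group ring `ℤG`. -/
noncomputable def grpInd {G : Type*} [Group G] (X : Finset G) : MonoidAlgebra ℤ G :=
  ∑ x ∈ X, MonoidAlgebra.single x (1 : ℤ)

/-- A Schur ring over a finite group `G`: a partition of `G` containing `{1}`,
closed under inverses, whose indicator elements span a subring of `ℤG`. -/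
structure SchurRing (G : Type*) [Group G] [Fintype G] [DecidableEq G] where
  parts : Finset (Finset G)
  nonempty_mem : ∀ X ∈ parts, X.Nonempty
  cover : ∀ g : G, ∃ X ∈ parts, g ∈ X
  pairwise_disjoint : ∀ X ∈ parts, ∀ Y ∈ parts, X ≠ Y → Disjoint X Y
  one_mem : ({1} : Finset G) ∈ parts
  inv_mem : ∀ X ∈ parts, X.image (·⁻¹) ∈ parts
  mul_mem : ∀ X ∈ parts, ∀ Y ∈ parts, ∃ c : Finset G → ℤ,
    grpInd X * grpInd Y = ∑ Z ∈ parts, c Z • grpInd Z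

namespace SchurRing

variable {G : Type*} [Group G] [Fintype G] [DecidableEq G]

/-- The underlying `ℤ`-module of the Schur ring: the span of the indicators of basic sets. -/
noncomputable def carrier (A : SchurRing G) : Submodule ℤ (MonoidAlgebra ℤ G) :=
  Submodule.span ℤ {v | ∃ X ∈ A.parts, v = grpInd X}

/-- `X ⊆ G` is an `A`-set if its indicator lies in `A`. -/
def IsASet (A : SchurRing G) (X : Finset G) : Prop := grpInd X ∈ A.carrier

/-- `A` is a subring of `B` (as S-rings over the same group). -/
def le (A B : SchurRing G) : Prop := ∀ X ∈ A.parts, grpInd X ∈ B.carrier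

end SchurRing

/-- An algebraic isomorphism of Schur rings: a bijection of basic sets preserving all
structure constants (the structure constant `c^Z_{X,Y}` is the coefficient of the
product `X̲·Y̲` at any `z ∈ Z`). -/
def IsAlgIso {G G' : Type*} [Group G] [Fintype G] [DecidableEq G]
    [Group G'] [Fintype G'] [DecidableEq G']
    (A : SchurRing G) (A' : SchurRing G') (φ : Finset G → Finset G') : Prop :=
  Set.BijOn φ ↑A.parts ↑A'.parts ∧
  ∀ X ∈ A.parts, ∀ Y ∈ A.parts, ∀ Z ∈ A.parts, ∀ z ∈ Z, ∀ z' ∈ φ Z,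
    (grpInd X * grpInd Y).coeff z = (grpInd (φ X) * grpInd (φ Y)).coeff z'

/-- A combinatorial isomorphism of Schur rings: a bijection `G → G'` mapping basic sets to
basic sets and inducing a Cayley graph isomorphism on each basic set. -/
def IsCombIso {G G' : Type*} [Group G] [Fintype G] [DecidableEq G]
    [Group G'] [Fintype G'] [DecidableEq G']
    (A : SchurRing G) (A' : SchurRing G') (f : G → G') : Prop :=
  Function.Bijective f ∧
  ∀ X ∈ A.parts, X.image f ∈ A'.parts ∧
    ∀ g h : G, h * g⁻¹ ∈ X ↔ f h * (f g)⁻¹ ∈ X.image f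

/-- An automorphism of a Schur ring: a permutation of `G` preserving the edge set of
`Cay(G,X)` for every basic set `X`. -/
def IsSchurAut {G : Type*} [Group G] [Fintype G] [DecidableEq G]
    (A : SchurRing G) (f : G → G) : Prop :=
  Function.Bijective f ∧ ∀ X ∈ A.parts, ∀ g h : G, h * g⁻¹ ∈ X ↔ f h * (f g)⁻¹ ∈ X

/-- Separability with respect to the class of (finite) abelian groups. -/
def SchurRing.IsSeparableAbelian {G : Type} [Group G] [Fintype G] [DecidableEq G]
    (A : SchurRing G) : Prop :=
  ∀ (G' : Type) [CommGroup G'] [Fintype G'] [DecidableEq G'],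
    ∀ (A' : SchurRing G') (φ : Finset G → Finset G'),
    IsAlgIso A A' φ →
    ∃ f : G → G', IsCombIso A A' f ∧ ∀ X ∈ A.parts, φ X = X.image f


lemma grpInd_apply' {G : Type*} [Group G] [DecidableEq G] (X : Finset G) (g : G) :
    (grpInd X).coeff g = if g ∈ X then 1 else 0 := by
  rw [grpInd, MonoidAlgebra.coeff_sum, Finsupp.finset_sum_apply]
  simp [MonoidAlgebra.coeff_single, Finsupp.single_apply, Finset.sum_ite_eq']

lemma grpInd_mul_apply' {G : Type*} [Group G] [DecidableEq G] (U V : Finset G) (g : G) :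
    (grpInd U * grpInd V).coeff g = ∑ u ∈ U, ∑ v ∈ V, (if u * v = g then 1 else 0 : ℤ) := by
  rw [grpInd, grpInd, Finset.sum_mul_sum]
  simp only [MonoidAlgebra.single_mul_single, one_mul]
  rw [MonoidAlgebra.coeff_sum, Finsupp.finset_sum_apply]
  refine Finset.sum_congr rfl fun u _ => ?_
  rw [MonoidAlgebra.coeff_sum, Finsupp.finset_sum_apply]
  simp [MonoidAlgebra.coeff_single, Finsupp.single_apply]

lemma grpInd_mul_pos_iff' {G : Type*} [Group G] [DecidableEq G] (U V : Finset G) (g : G) :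
    0 < (grpInd U * grpInd V).coeff g ↔ ∃ u ∈ U, ∃ v ∈ V, u * v = g := by
  rw [grpInd_mul_apply']
  constructor
  · intro h
    by_contra hc
    push_neg at hc
    rw [Finset.sum_eq_zero (fun u hu => Finset.sum_eq_zero fun v hv => by
      simp [hc u hu v hv])] at h
    exact lt_irrefl 0 h
  · rintro ⟨u, hu, v, hv, rfl⟩
    refine Finset.sum_pos' (fun a _ => Finset.sum_nonneg fun b _ => by positivity)
      ⟨u, hu, Finset.sum_pos' (fun b _ => by positivity) ⟨v, hv, by simp⟩⟩

namespace SchurRing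

lemma mem_carrier_of_mem_parts' {G : Type*} [Group G] [Fintype G] [DecidableEq G]
    (A : SchurRing G) {X} (hX : X ∈ A.parts) : grpInd X ∈ A.carrier :=
  Submodule.subset_span ⟨X, hX, rfl⟩

lemma carrier_mul_left' {G : Type*} [Group G] [Fintype G] [DecidableEq G]
    (A : SchurRing G) {X} (hX : X ∈ A.parts) {w} (hw : w ∈ A.carrier) :
    grpInd X * w ∈ A.carrier := by
  induction hw using Submodule.span_induction with
  | mem v hv =>
    obtain ⟨Y, hY, rfl⟩ := hv
    obtain ⟨c, hc⟩ := A.mul_mem X hX Y hY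
    rw [hc]
    exact Submodule.sum_mem _ fun Z hZ => Submodule.smul_mem _ _ (A.mem_carrier_of_mem_parts' hZ)
  | zero => rw [mul_zero]; exact zero_mem _
  | add x y hx hy ihx ihy => rw [mul_add]; exact add_mem ihx ihy
  | smul a x hx ih => rw [mul_smul_comm]; exact Submodule.smul_mem _ _ ih

lemma carrier_mul' {G : Type*} [Group G] [Fintype G] [DecidableEq G]
    (A : SchurRing G) {v w} (hv : v ∈ A.carrier) (hw : w ∈ A.carrier) :
    v * w ∈ A.carrier := by
  induction hv using Submodule.span_induction with
  | mem x hx => obtain ⟨X, hX, rfl⟩ := hx; exact A.carrier_mul_left' hX hw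
  | zero => rw [zero_mul]; exact zero_mem _
  | add x y hx hy ihx ihy => rw [add_mul]; exact add_mem ihx ihy
  | smul a x hx ih => rw [smul_mul_assoc]; exact Submodule.smul_mem _ _ ih

lemma carrier_const' {G : Type*} [Group G] [Fintype G] [DecidableEq G]
    (A : SchurRing G) {v} (hv : v ∈ A.carrier) {Z} (hZ : Z ∈ A.parts)
    {z z' : G} (hz : z ∈ Z) (hz' : z' ∈ Z) : v.coeff z = v.coeff z' := by
  induction hv using Submodule.span_induction with
  | mem x hx =>
    obtain ⟨Y, hY, rfl⟩ := hx
    rw [grpInd_apply', grpInd_apply']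
    by_cases h : Z = Y
    · subst h; simp [hz, hz']
    · have hd := A.pairwise_disjoint Z hZ Y hY h
      have h1 : z ∉ Y := fun hzY => (Finset.disjoint_left.mp hd hz) hzY
      have h2 : z' ∉ Y := fun hzY => (Finset.disjoint_left.mp hd hz') hzY
      simp [h1, h2]
  | zero => rfl
  | add x y _ _ ihx ihy => rw [MonoidAlgebra.coeff_add, Finsupp.add_apply, Finsupp.add_apply, ihx, ihy]
  | smul a x _ ih => rw [MonoidAlgebra.coeff_smul, Finsupp.smul_apply, Finsupp.smul_apply, ih]

end SchurRing

/-- if `G = G₁ × G₂` with `G₁`, `G₂` both `A`-subgroups, then the projection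
of every basic set to each factor (viewed inside `G`) is a basic set. -/
theorem stmt9 {G₁ G₂ : Type*} [CommGroup G₁] [CommGroup G₂]
    [Fintype G₁] [Fintype G₂] [DecidableEq G₁] [DecidableEq G₂]
    (A : SchurRing (G₁ × G₂))
    (h₁ : A.IsASet (Finset.univ.image (fun g : G₁ => (g, (1 : G₂)))))
    (h₂ : A.IsASet (Finset.univ.image (fun g : G₂ => ((1 : G₁), g)))) :
    ∀ X ∈ A.parts,
      (X.image Prod.fst).image (fun g : G₁ => (g, (1 : G₂))) ∈ A.parts ∧
      (X.image Prod.snd).image (fun g : G₂ => ((1 : G₁), g)) ∈ A.parts := by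
  classical
  intro X hX
  set H₁ : Finset (G₁ × G₂) := Finset.univ.image (fun g : G₁ => (g, (1 : G₂))) with hH₁def
  set H₂ : Finset (G₁ × G₂) := Finset.univ.image (fun g : G₂ => ((1 : G₁), g)) with hH₂def
  have h₁' : grpInd H₁ ∈ A.carrier := h₁
  have h₂' : grpInd H₂ ∈ A.carrier := h₂
  have memH₁ : ∀ g : G₁ × G₂, g ∈ H₁ ↔ g.2 = 1 := by
    intro g
    constructor
    · intro hg
      simp only [hH₁def, Finset.mem_image, Finset.mem_univ, true_and] at hg
      obtain ⟨a, ha⟩ := hg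
      rw [← ha]
    · intro hg
      simp only [hH₁def, Finset.mem_image]
      exact ⟨g.1, Finset.mem_univ _, by rw [← hg]⟩
  have memH₂ : ∀ g : G₁ × G₂, g ∈ H₂ ↔ g.1 = 1 := by
    intro g
    constructor
    · intro hg
      simp only [hH₂def, Finset.mem_image, Finset.mem_univ, true_and] at hg
      obtain ⟨a, ha⟩ := hg
      rw [← ha]
    · intro hg
      simp only [hH₂def, Finset.mem_image]
      exact ⟨g.2, Finset.mem_univ _, by rw [← hg]⟩
  have key₂ : ∀ (U : Finset (G₁ × G₂)) (g : G₁ × G₂),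
      0 < (grpInd U * grpInd H₂).coeff g ↔ g.1 ∈ U.image Prod.fst := by
    intro U g
    rw [grpInd_mul_pos_iff']
    constructor
    · rintro ⟨u, hu, v, hv, rfl⟩
      have hveq : v = (1, v.2) := Prod.ext_iff.mpr ⟨(memH₂ v).mp hv, rfl⟩
      refine Finset.mem_image.mpr ⟨u, hu, ?_⟩
      rw [hveq]
      simp
    · intro hg
      obtain ⟨u, hu, hu1⟩ := Finset.mem_image.mp hg
      refine ⟨u, hu, (1, u.2⁻¹ * g.2), (memH₂ _).mpr rfl, ?_⟩
      refine Prod.ext_iff.mpr ⟨?_, ?_⟩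
      · simpa using hu1
      · simp
  have key₁ : ∀ (U : Finset (G₁ × G₂)) (g : G₁ × G₂),
      0 < (grpInd U * grpInd H₁).coeff g ↔ g.2 ∈ U.image Prod.snd := by
    intro U g
    rw [grpInd_mul_pos_iff']
    constructor
    · rintro ⟨u, hu, v, hv, rfl⟩
      have hveq : v = (v.1, 1) := Prod.ext_iff.mpr ⟨rfl, (memH₁ v).mp hv⟩
      refine Finset.mem_image.mpr ⟨u, hu, ?_⟩
      rw [hveq]
      simp
    · intro hg
      obtain ⟨u, hu, hu1⟩ := Finset.mem_image.mp hg
      refine ⟨u, hu, (u.1⁻¹ * g.1, 1), (memH₁ _).mpr rfl, ?_⟩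
      refine Prod.ext_iff.mpr ⟨?_, ?_⟩
      · simp
      · simpa using hu1
  obtain ⟨x₀, hx₀⟩ := A.nonempty_mem X hX
  have hXc : grpInd X ∈ A.carrier := A.mem_carrier_of_mem_parts' hX
  constructor
  · obtain ⟨W, hW, hWmem⟩ := A.cover (x₀.1, 1)
    have hWc : grpInd W ∈ A.carrier := A.mem_carrier_of_mem_parts' hW
    have hP : grpInd X * grpInd H₂ ∈ A.carrier := A.carrier_mul' hXc h₂'
    have hQ : grpInd W * grpInd H₂ ∈ A.carrier := A.carrier_mul' hWc h₂'
    have hWH₁ : ∀ w ∈ W, w.2 = 1 := by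
      intro w hw
      have hconst := A.carrier_const' h₁' hW hw hWmem
      rw [grpInd_apply', grpInd_apply', if_pos ((memH₁ (x₀.1, 1)).mpr rfl)] at hconst
      by_cases hmem : w ∈ H₁
      · exact (memH₁ _).mp hmem
      · rw [if_neg hmem] at hconst
        exact absurd hconst (by norm_num)
    have hWT : ∀ w ∈ W, w.1 ∈ X.image Prod.fst := by
      intro w hw
      have hconst := A.carrier_const' hP hW hw hWmem
      have hpos : 0 < (grpInd X * grpInd H₂).coeff (x₀.1, 1) :=
        (key₂ X _).mpr (Finset.mem_image.mpr ⟨x₀, hx₀, rfl⟩)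
      exact (key₂ X w).mp (by rw [hconst]; exact hpos)
    have hXQ : ∀ x ∈ X, x.1 ∈ W.image Prod.fst := by
      intro x hx
      have hconst := A.carrier_const' hQ hX hx hx₀
      have hpos : 0 < (grpInd W * grpInd H₂).coeff x₀ :=
        (key₂ W x₀).mpr (Finset.mem_image.mpr ⟨(x₀.1, 1), hWmem, rfl⟩)
      exact (key₂ W x).mp (by rw [hconst]; exact hpos)
    have heq : (X.image Prod.fst).image (fun g : G₁ => (g, (1 : G₂))) = W := by
      ext g
      simp only [Finset.mem_image]
      constructor
      · rintro ⟨a, ha, rfl⟩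
        obtain ⟨x, hx, rfl⟩ := ha
        obtain ⟨w, hw, hw1⟩ := Finset.mem_image.mp (hXQ x hx)
        have hweq : w = (x.1, 1) := Prod.ext_iff.mpr ⟨hw1, hWH₁ w hw⟩
        exact hweq ▸ hw
      · intro hg
        obtain ⟨x, hx, hx1⟩ := Finset.mem_image.mp (hWT g hg)
        exact ⟨g.1, ⟨x, hx, hx1⟩,
          Prod.ext_iff.mpr ⟨rfl, (hWH₁ g hg).symm⟩⟩
    rw [heq]
    exact hW
  · obtain ⟨W, hW, hWmem⟩ := A.cover (1, x₀.2)
    have hWc : grpInd W ∈ A.carrier := A.mem_carrier_of_mem_parts' hW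
    have hP : grpInd X * grpInd H₁ ∈ A.carrier := A.carrier_mul' hXc h₁'
    have hQ : grpInd W * grpInd H₁ ∈ A.carrier := A.carrier_mul' hWc h₁'
    have hWH₂ : ∀ w ∈ W, w.1 = 1 := by
      intro w hw
      have hconst := A.carrier_const' h₂' hW hw hWmem
      rw [grpInd_apply', grpInd_apply', if_pos ((memH₂ (1, x₀.2)).mpr rfl)] at hconst
      by_cases hmem : w ∈ H₂
      · exact (memH₂ _).mp hmem
      · rw [if_neg hmem] at hconst
        exact absurd hconst (by norm_num)
    have hWT : ∀ w ∈ W, w.2 ∈ X.image Prod.snd := by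
      intro w hw
      have hconst := A.carrier_const' hP hW hw hWmem
      have hpos : 0 < (grpInd X * grpInd H₁).coeff (1, x₀.2) :=
        (key₁ X _).mpr (Finset.mem_image.mpr ⟨x₀, hx₀, rfl⟩)
      exact (key₁ X w).mp (by rw [hconst]; exact hpos)
    have hXQ : ∀ x ∈ X, x.2 ∈ W.image Prod.snd := by
      intro x hx
      have hconst := A.carrier_const' hQ hX hx hx₀
      have hpos : 0 < (grpInd W * grpInd H₁).coeff x₀ :=
        (key₁ W x₀).mpr (Finset.mem_image.mpr ⟨(1, x₀.2), hWmem, rfl⟩)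
      exact (key₁ W x).mp (by rw [hconst]; exact hpos)
    have heq : (X.image Prod.snd).image (fun g : G₂ => ((1 : G₁), g)) = W := by
      ext g
      simp only [Finset.mem_image]
      constructor
      · rintro ⟨a, ha, rfl⟩
        obtain ⟨x, hx, rfl⟩ := ha
        obtain ⟨w, hw, hw1⟩ := Finset.mem_image.mp (hXQ x hx)
        have hweq : w = (1, x.2) := Prod.ext_iff.mpr ⟨hWH₂ w hw, hw1⟩
        exact hweq ▸ hw
      · intro hg
        obtain ⟨x, hx, hx1⟩ := Finset.mem_image.mp (hWT g hg)
        exact ⟨g.2, ⟨x, hx, hx1⟩,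
          Prod.ext_iff.mpr ⟨(hWH₂ g hg).symm, rfl⟩⟩
    rw [heq]
    exact hW
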